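/- Let F be a lift of a conservative twist map with generating function S, and suppose the graph of a continuous ψ : 𝕋 → ℝ is F-invariant. Set c = ∫₀¹ψ(t)dt, η(θ) = ∫₀^θ ψ(t)dt − cθ (a ℤ-periodic C¹ function), and W(θ,Θ) = S(θ,Θ) + c(θ−Θ) + η(θ) − η(Θ). Then W(θ+1, Θ+1) = W(θ,Θ), W is coercive in |Θ−θ|, and the critical points of W are exactly the pairs (θ, π∘F(θ, ψ(θ))); the global minimum of W is attained precisely on this set. Consequently every orbit on the graph of ψ is minimizing for the action Σ S(θ_{k−1},θ_k) with fixed endpoints. -/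

import Mathlib

/-- `c = ∫₀¹ ψ`. -/
noncomputable def cconst (ψ : ℝ → ℝ) : ℝ := ∫ t in (0 : ℝ)..1, ψ t

/-- `η(θ) = ∫₀^θ ψ − cθ`. -/
noncomputable def etaFn (ψ : ℝ → ℝ) (θ : ℝ) : ℝ :=
  (∫ t in (0 : ℝ)..θ, ψ t) - cconst ψ * θ

/-- `W(θ,Θ) = S(θ,Θ) + c(θ−Θ) + η(θ) − η(Θ)`. -/
noncomputable def WFn (S : ℝ × ℝ → ℝ) (ψ : ℝ → ℝ) (θ Θ : ℝ) : ℝ :=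
  S (θ, Θ) + cconst ψ * (θ - Θ) + etaFn ψ θ - etaFn ψ Θ

open Set Function


namespace M19


noncomputable def S1 (S : ℝ × ℝ → ℝ) (θ Θ : ℝ) : ℝ := deriv (fun t => S (t, Θ)) θ
noncomputable def S2 (S : ℝ × ℝ → ℝ) (θ Θ : ℝ) : ℝ := deriv (fun u => S (θ, u)) Θ
noncomputable def B (S : ℝ × ℝ → ℝ) : ℝ × ℝ → (ℝ × ℝ) →L[ℝ] (ℝ × ℝ) →L[ℝ] ℝ :=
  fderiv ℝ (fderiv ℝ S)

variable {S : ℝ × ℝ → ℝ} {ε : ℝ}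

lemma hasDerivAt_S_fst (hS : ContDiff ℝ 2 S) (θ Θ : ℝ) :
    HasDerivAt (fun t => S (t, Θ)) (fderiv ℝ S (θ, Θ) (1, 0)) θ :=
  (hS.differentiable (by norm_num) (θ, Θ)).hasFDerivAt.comp_hasDerivAt θ
    ((hasDerivAt_id θ).prodMk (hasDerivAt_const θ Θ))

lemma hasDerivAt_S_snd (hS : ContDiff ℝ 2 S) (θ Θ : ℝ) :
    HasDerivAt (fun u => S (θ, u)) (fderiv ℝ S (θ, Θ) (0, 1)) Θ :=
  (hS.differentiable (by norm_num) (θ, Θ)).hasFDerivAt.comp_hasDerivAt Θ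
    ((hasDerivAt_const Θ θ).prodMk (hasDerivAt_id Θ))

lemma S1_eq (hS : ContDiff ℝ 2 S) (θ Θ : ℝ) : S1 S θ Θ = fderiv ℝ S (θ, Θ) (1, 0) :=
  (hasDerivAt_S_fst hS θ Θ).deriv

lemma S2_eq (hS : ContDiff ℝ 2 S) (θ Θ : ℝ) : S2 S θ Θ = fderiv ℝ S (θ, Θ) (0, 1) :=
  (hasDerivAt_S_snd hS θ Θ).deriv

lemma hasFDerivAt_fderiv (hS : ContDiff ℝ 2 S) (p : ℝ × ℝ) :
    HasFDerivAt (fderiv ℝ S) (B S p) p :=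
  ((hS.fderiv_right (m := 1) (by norm_num)).differentiable one_ne_zero p).hasFDerivAt

lemma hasDerivAt_S1_snd (hS : ContDiff ℝ 2 S) (θ Θ : ℝ) :
    HasDerivAt (fun u => S1 S θ u) (B S (θ, Θ) (0, 1) (1, 0)) Θ := by
  have hc : HasDerivAt (fun u => fderiv ℝ S (θ, u)) (B S (θ, Θ) (0, 1)) Θ :=
    (hasFDerivAt_fderiv hS (θ, Θ)).comp_hasDerivAt Θ
      ((hasDerivAt_const Θ θ).prodMk (hasDerivAt_id Θ))
  have h2 := hc.clm_apply (hasDerivAt_const Θ ((1 : ℝ), (0 : ℝ)))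
  have heq : (fun u => S1 S θ u) = fun u => fderiv ℝ S (θ, u) (1, 0) :=
    funext fun u => S1_eq hS θ u
  rw [heq]
  simpa using h2

lemma hasDerivAt_S2_fst (hS : ContDiff ℝ 2 S) (θ Θ : ℝ) :
    HasDerivAt (fun t => S2 S t Θ) (B S (θ, Θ) (1, 0) (0, 1)) θ := by
  have hc : HasDerivAt (fun t => fderiv ℝ S (t, Θ)) (B S (θ, Θ) (1, 0)) θ :=
    (hasFDerivAt_fderiv hS (θ, Θ)).comp_hasDerivAt θ
      ((hasDerivAt_id θ).prodMk (hasDerivAt_const θ Θ))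
  have h2 := hc.clm_apply (hasDerivAt_const θ ((0 : ℝ), (1 : ℝ)))
  have heq : (fun t => S2 S t Θ) = fun t => fderiv ℝ S (t, Θ) (0, 1) :=
    funext fun t => S2_eq hS t Θ
  rw [heq]
  simpa using h2

lemma Bsymm (hS : ContDiff ℝ 2 S) (p : ℝ × ℝ) (v w : ℝ × ℝ) :
    B S p v w = B S p w v :=
  second_derivative_symmetric
    (fun y => ((hS.differentiable (by norm_num)) y).hasFDerivAt)
    (hasFDerivAt_fderiv hS p) v w

lemma mix_le (hS : ContDiff ℝ 2 S)
    (hmix : ∀ θ Θ : ℝ, deriv (fun t => deriv (fun u => S (t, u)) Θ) θ ≤ -ε) (θ Θ : ℝ) :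
    B S (θ, Θ) (0, 1) (1, 0) ≤ -ε := by
  rw [Bsymm hS]
  have h := (hasDerivAt_S2_fst hS θ Θ).deriv
  have h2 := hmix θ Θ
  rw [show (fun t => deriv (fun u => S (t, u)) Θ) = fun t => S2 S t Θ from rfl] at h2
  rw [h] at h2
  exact h2

lemma rate_aux {f F' : ℝ → ℝ} (hf : ∀ x, HasDerivAt f (F' x) x)
    (hle : ∀ x, F' x ≤ -ε) {a b : ℝ} (hab : a ≤ b) : f b + ε * b ≤ f a + ε * a := by
  have h : ∀ x, HasDerivAt (fun y => f y + ε * y) (F' x + ε) x := fun x => by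
    exact ((hf x).add ((hasDerivAt_id x).const_mul ε)).congr_deriv (by simp)
  have := antitone_of_deriv_nonpos (fun x => (h x).differentiableAt)
    (fun x => by rw [(h x).deriv]; linarith [hle x]) hab
  exact this

lemma rateS1 (hS : ContDiff ℝ 2 S)
    (hmix : ∀ θ Θ : ℝ, deriv (fun t => deriv (fun u => S (t, u)) Θ) θ ≤ -ε)
    (θ : ℝ) {a b : ℝ} (hab : a ≤ b) : S1 S θ b + ε * b ≤ S1 S θ a + ε * a :=
  rate_aux (fun x => hasDerivAt_S1_snd hS θ x) (fun x => mix_le hS hmix θ x) hab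

lemma rateS2 (hS : ContDiff ℝ 2 S)
    (hmix : ∀ θ Θ : ℝ, deriv (fun t => deriv (fun u => S (t, u)) Θ) θ ≤ -ε)
    (Θ : ℝ) {a b : ℝ} (hab : a ≤ b) : S2 S b Θ + ε * b ≤ S2 S a Θ + ε * a := by
  refine rate_aux (fun x => hasDerivAt_S2_fst hS x Θ) (fun x => ?_) hab
  have := mix_le hS hmix x Θ
  rw [Bsymm hS] at this
  exact this

/-- injectivity of `Θ ↦ S1 θ Θ`. -/
lemma S1_inj (hS : ContDiff ℝ 2 S)
    (hmix : ∀ θ Θ : ℝ, deriv (fun t => deriv (fun u => S (t, u)) Θ) θ ≤ -ε)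
    (hε : 0 < ε) (θ : ℝ) {a b : ℝ} (h : S1 S θ a = S1 S θ b) : a = b := by
  rcases le_or_gt a b with hab | hab
  · have := rateS1 hS hmix θ hab
    nlinarith
  · have := rateS1 hS hmix θ hab.le
    nlinarith


lemma bdd_of_periodic {f : ℝ → ℝ} (hf : Continuous f) (hp : ∀ t, f (t + 1) = f t) :
    ∃ M : ℝ, 0 ≤ M ∧ ∀ t, |f t| ≤ M := by
  obtain ⟨M, hM⟩ := (isCompact_Icc (a := (0:ℝ)) (b := 1)).exists_bound_of_continuousOn
    hf.continuousOn
  have hper : Function.Periodic f 1 := hp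
  have key : ∀ t, |f t| ≤ M := by
    intro t
    have h1 : f t = f (Int.fract t) := by
      have := hper.sub_int_mul_eq (x := t) (n := ⌊t⌋)
      rw [Int.fract]
      simpa using this.symm
    rw [h1]
    have := hM (Int.fract t) ⟨Int.fract_nonneg t, (Int.fract_lt_one t).le⟩
    simpa [Real.norm_eq_abs] using this
  exact ⟨M, le_trans (abs_nonneg _) (key 0), key⟩

lemma S1_per (hper : ∀ θ Θ : ℝ, S (θ + 1, Θ + 1) = S (θ, Θ)) (θ Θ : ℝ) :
    S1 S (θ + 1) (Θ + 1) = S1 S θ Θ := by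
  unfold S1
  rw [show deriv (fun t => S (t, Θ + 1)) (θ + 1) = deriv ((fun t => S (t, Θ + 1)) ∘ (· + 1)) θ
    from (deriv_comp_add_const _ 1 θ).symm]
  congr 1
  funext t
  simp [Function.comp, hper t Θ]

lemma S2_per (hper : ∀ θ Θ : ℝ, S (θ + 1, Θ + 1) = S (θ, Θ)) (θ Θ : ℝ) :
    S2 S (θ + 1) (Θ + 1) = S2 S θ Θ := by
  unfold S2
  rw [show deriv (fun u => S (θ + 1, u)) (Θ + 1) = deriv ((fun u => S (θ + 1, u)) ∘ (· + 1)) Θ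
    from (deriv_comp_add_const _ 1 Θ).symm]
  congr 1
  funext u
  simp [Function.comp, hper θ u]

variable {ψ : ℝ → ℝ}

lemma hasDerivAt_eta (hψc : Continuous ψ) (θ : ℝ) :
    HasDerivAt (etaFn ψ) (ψ θ - cconst ψ) θ := by
  have h1 : HasDerivAt (fun u => ∫ t in (0:ℝ)..u, ψ t) (ψ θ) θ :=
    (hψc.integral_hasStrictDerivAt 0 θ).hasDerivAt
  have h2 : HasDerivAt (fun u : ℝ => cconst ψ * u) (cconst ψ) θ := by
    simpa using (hasDerivAt_id θ).const_mul (cconst ψ)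
  exact h1.sub h2

lemma eta_per (hψc : Continuous ψ) (hψper : ∀ θ, ψ (θ + 1) = ψ θ) (θ : ℝ) :
    etaFn ψ (θ + 1) = etaFn ψ θ := by
  have hp : Function.Periodic ψ 1 := hψper
  have hint : (∫ t in θ..θ + 1, ψ t) = ∫ t in (0:ℝ)..(0:ℝ) + 1, ψ t :=
    hp.intervalIntegral_add_eq θ 0
  have hsplit : (∫ t in (0:ℝ)..(θ + 1), ψ t)
      = (∫ t in (0:ℝ)..θ, ψ t) + ∫ t in θ..θ + 1, ψ t :=
    (intervalIntegral.integral_add_adjacent_intervals (hψc.intervalIntegrable _ _)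
      (hψc.intervalIntegrable _ _)).symm
  unfold etaFn cconst
  rw [hsplit, hint]
  simp
  ring

lemma hasDerivAt_W_fst (hS : ContDiff ℝ 2 S) (hψc : Continuous ψ) (θ Θ : ℝ) :
    HasDerivAt (fun t => WFn S ψ t Θ) (S1 S θ Θ + ψ θ) θ := by
  have h1 := hasDerivAt_S_fst hS θ Θ
  have h2 : HasDerivAt (fun t : ℝ => cconst ψ * (t - Θ)) (cconst ψ) θ := by
    simpa using ((hasDerivAt_id θ).sub_const Θ).const_mul (cconst ψ)
  have h3 := hasDerivAt_eta hψc θ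
  have h4 := ((h1.add h2).add h3).sub_const (etaFn ψ Θ)
  have : (fun t => WFn S ψ t Θ)
      = fun t => S (t, Θ) + cconst ψ * (t - Θ) + etaFn ψ t - etaFn ψ Θ := rfl
  rw [this]
  refine h4.congr_deriv ?_
  rw [S1_eq hS]
  ring

lemma hasDerivAt_W_snd (hS : ContDiff ℝ 2 S) (hψc : Continuous ψ) (θ Θ : ℝ) :
    HasDerivAt (fun u => WFn S ψ θ u) (S2 S θ Θ - ψ Θ) Θ := by
  have h1 := hasDerivAt_S_snd hS θ Θ
  have h2 : HasDerivAt (fun u : ℝ => cconst ψ * (θ - u)) (-cconst ψ) Θ := by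
    simpa using ((hasDerivAt_id Θ).const_sub θ).const_mul (cconst ψ)
  have h3 := hasDerivAt_eta hψc Θ
  have h4 := (((h1.add h2).add_const (etaFn ψ θ)).sub h3)
  have : (fun u => WFn S ψ θ u)
      = fun u => S (θ, u) + cconst ψ * (θ - u) + etaFn ψ θ - etaFn ψ u := rfl
  rw [this]
  refine h4.congr_deriv ?_
  rw [S2_eq hS]
  ring



lemma hasDerivAt_S1_fst (hS : ContDiff ℝ 2 S) (θ Θ : ℝ) :
    HasDerivAt (fun t => S1 S t Θ) (B S (θ, Θ) (1, 0) (1, 0)) θ := by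
  have hc : HasDerivAt (fun t => fderiv ℝ S (t, Θ)) (B S (θ, Θ) (1, 0)) θ :=
    (hasFDerivAt_fderiv hS (θ, Θ)).comp_hasDerivAt θ
      ((hasDerivAt_id θ).prodMk (hasDerivAt_const θ Θ))
  have h2 := hc.clm_apply (hasDerivAt_const θ ((1 : ℝ), (0 : ℝ)))
  have heq : (fun t => S1 S t Θ) = fun t => fderiv ℝ S (t, Θ) (1, 0) :=
    funext fun t => S1_eq hS t Θ
  rw [heq]
  simpa using h2

lemma mvt_bound {f f' : ℝ → ℝ} {L a b : ℝ} (hab : a ≤ b)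
    (hf : ∀ x, HasDerivAt f (f' x) x) (hb : ∀ x ∈ Icc a b, |f' x| ≤ L) :
    |f b - f a| ≤ L * (b - a) := by
  have h := norm_image_sub_le_of_norm_deriv_le_segment' (f := f) (f' := f') (C := L)
    (fun x _ => (hf x).hasDerivWithinAt)
    (fun x hx => by simpa [Real.norm_eq_abs] using hb x (Ico_subset_Icc_self hx))
    b (right_mem_Icc.2 hab)
  simpa [Real.norm_eq_abs] using h

lemma S1_cont (hS : ContDiff ℝ 2 S) : Continuous fun p : ℝ × ℝ => S1 S p.1 p.2 := by
  have : (fun p : ℝ × ℝ => S1 S p.1 p.2) = fun p : ℝ × ℝ => fderiv ℝ S p (1, 0) :=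
    funext fun p => S1_eq hS p.1 p.2
  rw [this]
  exact (hS.continuous_fderiv (by norm_num)).clm_apply continuous_const

lemma S2_cont (hS : ContDiff ℝ 2 S) : Continuous fun p : ℝ × ℝ => S2 S p.1 p.2 := by
  have : (fun p : ℝ × ℝ => S2 S p.1 p.2) = fun p : ℝ × ℝ => fderiv ℝ S p (0, 1) :=
    funext fun p => S2_eq hS p.1 p.2
  rw [this]
  exact (hS.continuous_fderiv (by norm_num)).clm_apply continuous_const

lemma B_cont (hS : ContDiff ℝ 2 S) (v w : ℝ × ℝ) :
    Continuous fun p : ℝ × ℝ => B S p v w :=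
  (((hS.fderiv_right (m := 1) (by norm_num)).continuous_fderiv
    one_ne_zero).clm_apply continuous_const).clm_apply continuous_const

section G

variable {ψ g : ℝ → ℝ}

/-- the gap estimate: `ε |b - a| ≤ |S1 θ b - S1 θ a|`. -/
lemma S1_gap (hS : ContDiff ℝ 2 S)
    (hmix : ∀ θ Θ : ℝ, deriv (fun t => deriv (fun u => S (t, u)) Θ) θ ≤ -ε)
    (θ : ℝ) (a b : ℝ) : ε * |b - a| ≤ |S1 S θ b - S1 S θ a| := by
  rcases le_total a b with hab | hab
  · have := rateS1 hS hmix θ hab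
    rcases le_or_gt 0 ε with h0 | h0
    · rw [abs_of_nonneg (by linarith), abs_of_nonpos (by nlinarith)]; linarith
    · nlinarith [abs_nonneg (S1 S θ b - S1 S θ a), abs_nonneg (b - a)]
  · have := rateS1 hS hmix θ hab
    rcases le_or_gt 0 ε with h0 | h0
    · rw [abs_of_nonpos (by linarith), abs_of_nonneg (by nlinarith)]; linarith
    · nlinarith [abs_nonneg (S1 S θ b - S1 S θ a), abs_nonneg (b - a)]

lemma S2_gap (hS : ContDiff ℝ 2 S)
    (hmix : ∀ θ Θ : ℝ, deriv (fun t => deriv (fun u => S (t, u)) Θ) θ ≤ -ε)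
    (Θ : ℝ) (a b : ℝ) : ε * |b - a| ≤ |S2 S b Θ - S2 S a Θ| := by
  rcases le_total a b with hab | hab
  · have := rateS2 hS hmix Θ hab
    rcases le_or_gt 0 ε with h0 | h0
    · rw [abs_of_nonneg (by linarith), abs_of_nonpos (by nlinarith)]; linarith
    · nlinarith [abs_nonneg (S2 S b Θ - S2 S a Θ), abs_nonneg (b - a)]
  · have := rateS2 hS hmix Θ hab
    rcases le_or_gt 0 ε with h0 | h0
    · rw [abs_of_nonpos (by linarith), abs_of_nonneg (by nlinarith)]; linarith
    · nlinarith [abs_nonneg (S2 S b Θ - S2 S a Θ), abs_nonneg (b - a)]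

lemma g_bound (hS : ContDiff ℝ 2 S) (hε : 0 < ε)
    (hmix : ∀ θ Θ : ℝ, deriv (fun t => deriv (fun u => S (t, u)) Θ) θ ≤ -ε)
    (hper : ∀ θ Θ : ℝ, S (θ + 1, Θ + 1) = S (θ, Θ))
    (hψc : Continuous ψ) (hψper : ∀ θ, ψ (θ + 1) = ψ θ)
    (hg1 : ∀ θ, S1 S θ (g θ) = -(ψ θ)) :
    ∃ C : ℝ, 0 ≤ C ∧ ∀ θ, |g θ - θ| ≤ C := by
  obtain ⟨M1, hM1pos, hM1⟩ := bdd_of_periodic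
    ((S1_cont hS).comp (continuous_id.prodMk continuous_id))
    (fun t => S1_per hper t t)
  obtain ⟨Mψ, hMψpos, hMψ⟩ := bdd_of_periodic hψc hψper
  refine ⟨(M1 + Mψ) / ε, by positivity, fun θ => ?_⟩
  rw [le_div_iff₀ hε]
  have hgap := S1_gap hS hmix (ε := ε) θ θ (g θ)
  have h1 : |S1 S θ (g θ) - S1 S θ θ| ≤ M1 + Mψ := by
    rw [hg1 θ]
    calc |-(ψ θ) - S1 S θ θ| ≤ |ψ θ| + |S1 S θ θ| := by
          rw [show -(ψ θ) - S1 S θ θ = -(ψ θ + S1 S θ θ) by ring, abs_neg]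
          exact abs_add_le _ _
      _ ≤ Mψ + M1 := add_le_add (hMψ θ) (hM1 θ)
      _ = M1 + Mψ := by ring
  nlinarith [hgap, h1]

lemma mem_box {x y a1 a2 b1 b2 : ℝ} (h1 : a1 ≤ x) (h2 : x ≤ b1) (h3 : a2 ≤ y)
    (h4 : y ≤ b2) : ((x, y) : ℝ × ℝ) ∈ Icc (a1, a2) (b1, b2) :=
  ⟨Prod.mk_le_mk.mpr ⟨h1, h3⟩, Prod.mk_le_mk.mpr ⟨h2, h4⟩⟩

lemma g_cont (hS : ContDiff ℝ 2 S) (hε : 0 < ε)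
    (hmix : ∀ θ Θ : ℝ, deriv (fun t => deriv (fun u => S (t, u)) Θ) θ ≤ -ε)
    (hψc : Continuous ψ)
    (hg1 : ∀ θ, S1 S θ (g θ) = -(ψ θ)) {C : ℝ} (hC : 0 ≤ C)
    (hgb : ∀ θ, |g θ - θ| ≤ C) : Continuous g := by
  rw [continuous_iff_continuousAt]
  intro θ₀
  obtain ⟨L, hL⟩ := (isCompact_Icc (a := ((θ₀ - 1 : ℝ), (θ₀ - C - 1 : ℝ)))
    (b := ((θ₀ + 1 : ℝ), (θ₀ + C + 1 : ℝ)))).exists_bound_of_continuousOn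
    (B_cont hS (1, 0) (1, 0)).continuousOn
  have hL0 : 0 ≤ L := le_trans (norm_nonneg _)
    (hL (θ₀, θ₀) (mem_box (by linarith) (by linarith) (by linarith) (by linarith)))
  have key : ∀ θ' ∈ Icc (θ₀ - 1) (θ₀ + 1),
      |g θ' - g θ₀| ≤ (L * |θ' - θ₀| + |ψ θ' - ψ θ₀|) / ε := by
    intro θ' hθ'
    have hgap := S1_gap hS hmix (ε := ε) θ₀ (g θ₀) (g θ')
    have h3 := abs_le.mp (hgb θ')
    have hmem : ∀ t ∈ Icc (min θ₀ θ') (max θ₀ θ'), ((t : ℝ), g θ') ∈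
        Icc ((θ₀ - 1 : ℝ), (θ₀ - C - 1 : ℝ)) ((θ₀ + 1 : ℝ), (θ₀ + C + 1 : ℝ)) := by
      intro t ht
      refine mem_box ?_ ?_ ?_ ?_
      · exact le_trans (le_min (by linarith) (by linarith [hθ'.1])) ht.1
      · exact le_trans ht.2 (max_le (by linarith) (by linarith [hθ'.2]))
      · linarith [hθ'.1, h3.1]
      · linarith [hθ'.2, h3.2]
    have hd : |S1 S θ₀ (g θ') - S1 S θ' (g θ')| ≤ L * |θ' - θ₀| := by
      rcases le_total θ₀ θ' with h | h
      · have := mvt_bound (f := fun t => S1 S t (g θ')) (f' := fun t => B S (t, g θ') (1,0) (1,0))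
          (a := θ₀) (b := θ') h (fun x => hasDerivAt_S1_fst hS x (g θ'))
          (fun x hx => by
            have := hL (x, g θ') (hmem x (by
              rw [min_eq_left h, max_eq_right h]; exact hx))
            simpa [Real.norm_eq_abs] using this)
        rw [abs_sub_comm]
        calc |S1 S θ' (g θ') - S1 S θ₀ (g θ')| ≤ L * (θ' - θ₀) := this
          _ = L * |θ' - θ₀| := by rw [abs_of_nonneg (by linarith)]
      · have := mvt_bound (f := fun t => S1 S t (g θ')) (f' := fun t => B S (t, g θ') (1,0) (1,0))
          (a := θ') (b := θ₀) h (fun x => hasDerivAt_S1_fst hS x (g θ'))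
          (fun x hx => by
            have := hL (x, g θ') (hmem x (by
              rw [min_eq_right h, max_eq_left h]; exact hx))
            simpa [Real.norm_eq_abs] using this)
        calc |S1 S θ₀ (g θ') - S1 S θ' (g θ')| ≤ L * (θ₀ - θ') := this
          _ = L * |θ' - θ₀| := by rw [abs_sub_comm, abs_of_nonneg (by linarith)]
    have hsum : |S1 S θ₀ (g θ') - S1 S θ₀ (g θ₀)| ≤ L * |θ' - θ₀| + |ψ θ' - ψ θ₀| := by
      have heq : S1 S θ₀ (g θ') - S1 S θ₀ (g θ₀)
          = (S1 S θ₀ (g θ') - S1 S θ' (g θ')) + (ψ θ₀ - ψ θ') := by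
        rw [hg1 θ₀, hg1 θ']; ring
      rw [heq]
      calc |(S1 S θ₀ (g θ') - S1 S θ' (g θ')) + (ψ θ₀ - ψ θ')|
          ≤ |S1 S θ₀ (g θ') - S1 S θ' (g θ')| + |ψ θ₀ - ψ θ'| := abs_add_le _ _
        _ ≤ L * |θ' - θ₀| + |ψ θ' - ψ θ₀| := by
            rw [abs_sub_comm (ψ θ₀)]; exact add_le_add hd le_rfl
    rw [le_div_iff₀ hε]
    calc |g θ' - g θ₀| * ε = ε * |g θ' - g θ₀| := mul_comm _ _
      _ ≤ |S1 S θ₀ (g θ') - S1 S θ₀ (g θ₀)| := hgap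
      _ ≤ L * |θ' - θ₀| + |ψ θ' - ψ θ₀| := hsum
  have h0 : Filter.Tendsto (fun θ' => (L * |θ' - θ₀| + |ψ θ' - ψ θ₀|) / ε)
      (nhds θ₀) (nhds 0) := by
    have hc : Continuous fun θ' => (L * |θ' - θ₀| + |ψ θ' - ψ θ₀|) / ε := by
      apply Continuous.div_const
      exact ((continuous_const.mul ((continuous_id.sub continuous_const).abs)).add
        ((hψc.sub continuous_const).abs))
    have := hc.tendsto θ₀
    simpa using this
  have hsq : Filter.Tendsto (fun θ' => |g θ' - g θ₀|) (nhds θ₀) (nhds 0) := by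
    apply squeeze_zero' (Filter.Eventually.of_forall (fun x => abs_nonneg _))
      (Filter.eventually_of_mem (Icc_mem_nhds (by linarith) (by linarith)) key) h0
  rw [ContinuousAt, tendsto_iff_dist_tendsto_zero]
  simpa [Real.dist_eq] using hsq

lemma g_mono (hS : ContDiff ℝ 2 S) (hε : 0 < ε)
    (hmix : ∀ θ Θ : ℝ, deriv (fun t => deriv (fun u => S (t, u)) Θ) θ ≤ -ε)
    (hg2 : ∀ θ, S2 S θ (g θ) = ψ (g θ)) (hgc : Continuous g)
    {C : ℝ} (hgb : ∀ θ, |g θ - θ| ≤ C) : StrictMono g := by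
  have hinj : Function.Injective g := by
    intro a b hab
    have h1 : S2 S a (g a) = S2 S b (g a) := by
      rw [hg2 a, hab, hg2 b]
    have h2 := S2_gap hS hmix (ε := ε) (g a) a b
    rw [show S2 S b (g a) - S2 S a (g a) = 0 by rw [← h1]; ring] at h2
    simp at h2
    have : |b - a| ≤ 0 := by nlinarith [abs_nonneg (b - a)]
    have := abs_eq_zero.mp (le_antisymm this (abs_nonneg _))
    linarith [sub_eq_zero.mp this]
  rcases hgc.strictMono_of_inj hinj with h | h
  · exact h
  · exfalso
    set t := max 1 (g 0 + C + 1) with ht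
    have h1 : g t < g 0 := h (lt_of_lt_of_le zero_lt_one (le_max_left _ _))
    have h2 : t - C ≤ g t := by
      have := abs_le.mp (hgb t); linarith [this.1]
    have h3 : g 0 + C + 1 ≤ t := le_max_right _ _
    linarith

lemma g_surj (hgc : Continuous g) {C : ℝ} (hC : 0 ≤ C)
    (hgb : ∀ θ, |g θ - θ| ≤ C) : Function.Surjective g := by
  intro y
  have h1 := abs_le.mp (hgb (y - C - 1))
  have h2 := abs_le.mp (hgb (y + C + 1))
  have hsub : y ∈ Icc (g (y - C - 1)) (g (y + C + 1)) :=
    ⟨by linarith [h1.2], by linarith [h2.1]⟩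
  obtain ⟨t, _, ht⟩ := intermediate_value_Icc
    (by linarith : y - C - 1 ≤ y + C + 1) hgc.continuousOn hsub
  exact ⟨t, ht⟩

lemma W_strict (hS : ContDiff ℝ 2 S) (hε : 0 < ε)
    (hmix : ∀ θ Θ : ℝ, deriv (fun t => deriv (fun u => S (t, u)) Θ) θ ≤ -ε)
    (hψc : Continuous ψ)
    (hg2 : ∀ θ, S2 S θ (g θ) = ψ (g θ)) (hgm : StrictMono g)
    (hgs : Function.Surjective g) (θ Θ : ℝ) (hne : Θ ≠ g θ) :
    WFn S ψ θ (g θ) < WFn S ψ θ Θ := by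
  have hf : ∀ u, HasDerivAt (fun u => WFn S ψ θ u) (S2 S θ u - ψ u) u :=
    fun u => hasDerivAt_W_snd hS hψc θ u
  have hcont : Continuous fun u => WFn S ψ θ u :=
    continuous_iff_continuousAt.mpr fun u => (hf u).continuousAt
  have hpos : ∀ u, g θ < u → 0 < S2 S θ u - ψ u := by
    intro u hu
    obtain ⟨t, rfl⟩ := hgs u
    have hθt : θ < t := hgm.lt_iff_lt.mp hu
    have h := rateS2 hS hmix (g t) hθt.le
    rw [hg2 t] at h
    nlinarith
  have hneg : ∀ u, u < g θ → S2 S θ u - ψ u < 0 := by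
    intro u hu
    obtain ⟨t, rfl⟩ := hgs u
    have hθt : t < θ := hgm.lt_iff_lt.mp hu
    have h := rateS2 hS hmix (g t) hθt.le
    rw [hg2 t] at h
    nlinarith
  rcases lt_or_gt_of_ne hne with h | h
  · have hanti : StrictAntiOn (fun u => WFn S ψ θ u) (Iic (g θ)) := by
      refine strictAntiOn_of_deriv_neg (convex_Iic _) hcont.continuousOn ?_
      intro x hx
      rw [interior_Iic] at hx
      rw [(hf x).deriv]
      exact hneg x hx
    exact hanti (mem_Iic.mpr h.le) (mem_Iic.mpr le_rfl) h
  · have hmono : StrictMonoOn (fun u => WFn S ψ θ u) (Ici (g θ)) := by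
      refine strictMonoOn_of_deriv_pos (convex_Ici _) hcont.continuousOn ?_
      intro x hx
      rw [interior_Ici] at hx
      rw [(hf x).deriv]
      exact hpos x hx
    exact hmono (mem_Ici.mpr le_rfl) (mem_Ici.mpr h.le) h

lemma W_le (hS : ContDiff ℝ 2 S) (hε : 0 < ε)
    (hmix : ∀ θ Θ : ℝ, deriv (fun t => deriv (fun u => S (t, u)) Θ) θ ≤ -ε)
    (hψc : Continuous ψ)
    (hg2 : ∀ θ, S2 S θ (g θ) = ψ (g θ)) (hgm : StrictMono g)
    (hgs : Function.Surjective g) (θ Θ : ℝ) :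
    WFn S ψ θ (g θ) ≤ WFn S ψ θ Θ := by
  rcases eq_or_ne Θ (g θ) with rfl | hne
  · exact le_rfl
  · exact (W_strict hS hε hmix hψc hg2 hgm hgs θ Θ hne).le

lemma m_const (hS : ContDiff ℝ 2 S) (hε : 0 < ε)
    (hmix : ∀ θ Θ : ℝ, deriv (fun t => deriv (fun u => S (t, u)) Θ) θ ≤ -ε)
    (hψc : Continuous ψ)
    (hg1 : ∀ θ, S1 S θ (g θ) = -(ψ θ)) (hgm : StrictMono g)
    (hWle : ∀ θ Θ : ℝ, WFn S ψ θ (g θ) ≤ WFn S ψ θ Θ)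
    {C : ℝ} (hC : 0 ≤ C) (hgb : ∀ θ, |g θ - θ| ≤ C)
    (θ θ' : ℝ) : WFn S ψ θ (g θ) = WFn S ψ θ' (g θ') := by
  -- enough to treat θ < θ'
  have main : ∀ a b : ℝ, a < b → WFn S ψ a (g a) = WFn S ψ b (g b) := by
    intro θ θ' hθθ'
    obtain ⟨L, hL⟩ := (isCompact_Icc (a := ((θ : ℝ), (θ - C : ℝ)))
      (b := ((θ' : ℝ), (θ' + C : ℝ)))).exists_bound_of_continuousOn
      (B_cont hS (0, 1) (1, 0)).continuousOn
    have hL0 : 0 ≤ L := le_trans (norm_nonneg _)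
      (hL (θ, θ) (mem_box le_rfl hθθ'.le (by linarith) (by linarith)))
    -- the crucial step bound
    have hstep : ∀ a b : ℝ, θ ≤ a → a ≤ b → b ≤ θ' → ∀ Θ : ℝ, g a ≤ Θ → Θ ≤ g b →
        |WFn S ψ b Θ - WFn S ψ a Θ| ≤ L * (g b - g a) * (b - a) := by
      intro a b hθa hab hbθ' Θ hΘ1 hΘ2
      have hga : θ - C ≤ g a := by have := (abs_le.mp (hgb a)).1; linarith
      have hgbu : g b ≤ θ' + C := by have := (abs_le.mp (hgb b)).2; linarith
      -- pointwise derivative bound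
      have hder : ∀ t ∈ Icc a b, |S1 S t Θ + ψ t| ≤ L * (g b - g a) := by
        intro t ht
        have hgt1 : g a ≤ g t := hgm.monotone ht.1
        have hgt2 : g t ≤ g b := hgm.monotone ht.2
        have heq : S1 S t Θ + ψ t = S1 S t Θ - S1 S t (g t) := by rw [hg1 t]; ring
        rw [heq]
        have hbd : ∀ s ∈ Icc (min (g t) Θ) (max (g t) Θ),
            |B S (t, s) (0, 1) (1, 0)| ≤ L := by
          intro s hs
          have hs1 : g a ≤ s := le_trans (le_min hgt1 hΘ1) hs.1
          have hs2 : s ≤ g b := le_trans hs.2 (max_le hgt2 hΘ2)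
          have := hL (t, s) (mem_box (by linarith [ht.1]) (by linarith [ht.2])
            (by linarith) (by linarith))
          simpa [Real.norm_eq_abs] using this
        rcases le_total (g t) Θ with hc | hc
        · have := mvt_bound (f := fun s => S1 S t s)
            (f' := fun s => B S (t, s) (0, 1) (1, 0)) (a := g t) (b := Θ) hc
            (fun s => hasDerivAt_S1_snd hS t s)
            (fun s hs => hbd s (by rwa [min_eq_left hc, max_eq_right hc]))
          calc |S1 S t Θ - S1 S t (g t)| ≤ L * (Θ - g t) := this
            _ ≤ L * (g b - g a) := by
                apply mul_le_mul_of_nonneg_left _ hL0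
                linarith
        · have := mvt_bound (f := fun s => S1 S t s)
            (f' := fun s => B S (t, s) (0, 1) (1, 0)) (a := Θ) (b := g t) hc
            (fun s => hasDerivAt_S1_snd hS t s)
            (fun s hs => hbd s (by rwa [min_eq_right hc, max_eq_left hc]))
          calc |S1 S t Θ - S1 S t (g t)| ≤ L * (g t - Θ) := by
                rw [abs_sub_comm]; exact this
            _ ≤ L * (g b - g a) := by
                apply mul_le_mul_of_nonneg_left _ hL0
                linarith
      have := mvt_bound (f := fun t => WFn S ψ t Θ)
        (f' := fun t => S1 S t Θ + ψ t) (a := a) (b := b) hab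
        (fun t => hasDerivAt_W_fst hS hψc t Θ) hder
      exact this
    -- telescoping
    have htel : ∀ n : ℕ, 0 < n →
        |WFn S ψ θ' (g θ') - WFn S ψ θ (g θ)|
          ≤ L * (g θ' - g θ) * (θ' - θ) / n := by
      intro n hn
      set Δ : ℝ := (θ' - θ) / n with hΔ
      have hnR : (0 : ℝ) < n := Nat.cast_pos.mpr hn
      have hΔpos : 0 < Δ := div_pos (by linarith) hnR
      set pts : ℕ → ℝ := fun i => θ + i * Δ with hpts
      have hptsn : pts n = θ' := by
        simp only [hpts, hΔ]
        field_simp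
        ring
      have hmem : ∀ i : ℕ, i ≤ n → θ ≤ pts i ∧ pts i ≤ θ' := by
        intro i hi
        have hi' : (i : ℝ) ≤ n := Nat.cast_le.mpr hi
        constructor
        · simp only [hpts]; nlinarith [hΔpos.le, Nat.cast_nonneg (α := ℝ) i]
        · simp only [hpts, hΔ]
          rw [div_eq_mul_inv]
          have : (i : ℝ) * ((θ' - θ) * (n : ℝ)⁻¹) ≤ (n : ℝ) * ((θ' - θ) * (n : ℝ)⁻¹) := by
            apply mul_le_mul_of_nonneg_right hi'
            positivity
          calc θ + i * ((θ' - θ) * (n : ℝ)⁻¹) ≤ θ + (n : ℝ) * ((θ' - θ) * (n : ℝ)⁻¹) := by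
                linarith
            _ = θ' := by field_simp; ring
      set m : ℕ → ℝ := fun i => WFn S ψ (pts i) (g (pts i)) with hm
      set gf : ℕ → ℝ := fun i => g (pts i) with hgf
      have hstepi : ∀ i ∈ Finset.range n,
          m (i + 1) - m i ≤ L * (gf (i + 1) - gf i) * Δ ∧
          m i - m (i + 1) ≤ L * (gf (i + 1) - gf i) * Δ := by
        intro i hi
        have hin : i + 1 ≤ n := Finset.mem_range.mp hi
        have h1 := hmem i (by omega)
        have h2 := hmem (i + 1) hin
        have hab : pts i ≤ pts (i + 1) := by
          simp only [hpts]
          push_cast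
          nlinarith [hΔpos.le]
        have hdiff : pts (i + 1) - pts i = Δ := by
          simp only [hpts]
          push_cast
          ring
        have hgab : gf i ≤ gf (i + 1) := hgm.monotone hab
        constructor
        · have hb1 : m (i + 1) ≤ WFn S ψ (pts (i + 1)) (gf i) := hWle _ _
          have hb2 := hstep (pts i) (pts (i + 1)) h1.1 hab h2.2 (gf i) le_rfl hgab
          rw [hdiff] at hb2
          have := (abs_le.mp hb2).2
          simp only [hm, hgf] at *
          linarith
        · have hb1 : m i ≤ WFn S ψ (pts i) (gf (i + 1)) := hWle _ _
          have hb2 := hstep (pts i) (pts (i + 1)) h1.1 hab h2.2 (gf (i + 1)) hgab le_rfl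
          rw [hdiff] at hb2
          have := (abs_le.mp hb2).1
          simp only [hm, hgf] at *
          linarith
      have hsum1 : WFn S ψ θ' (g θ') - WFn S ψ θ (g θ)
          = ∑ i ∈ Finset.range n, (m (i + 1) - m i) := by
        rw [Finset.sum_range_sub]
        simp only [hm, hpts]
        rw [show θ + (n : ℝ) * Δ = θ' from by rw [← hptsn]]
        norm_num
      have hsum2 : ∑ i ∈ Finset.range n, (gf (i + 1) - gf i) = g θ' - g θ := by
        rw [Finset.sum_range_sub]
        simp only [hgf, hpts]
        rw [show θ + (n : ℝ) * Δ = θ' from by rw [← hptsn]]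
        norm_num
      have hub : WFn S ψ θ' (g θ') - WFn S ψ θ (g θ) ≤ L * (g θ' - g θ) * Δ := by
        rw [hsum1]
        calc ∑ i ∈ Finset.range n, (m (i + 1) - m i)
            ≤ ∑ i ∈ Finset.range n, L * (gf (i + 1) - gf i) * Δ :=
              Finset.sum_le_sum (fun i hi => (hstepi i hi).1)
          _ = L * (g θ' - g θ) * Δ := by
              rw [show (fun i => L * (gf (i + 1) - gf i) * Δ)
                = fun i => (L * Δ) * (gf (i + 1) - gf i) from funext fun i => by ring]
              rw [← Finset.mul_sum, hsum2]
              ring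
      have hlb : WFn S ψ θ (g θ) - WFn S ψ θ' (g θ') ≤ L * (g θ' - g θ) * Δ := by
        rw [show WFn S ψ θ (g θ) - WFn S ψ θ' (g θ')
          = ∑ i ∈ Finset.range n, (m i - m (i + 1)) from by
            rw [show (fun i => m i - m (i+1)) = fun i => -(m (i+1) - m i) from
              funext fun i => by ring, Finset.sum_neg_distrib, ← hsum1]; ring]
        calc ∑ i ∈ Finset.range n, (m i - m (i + 1))
            ≤ ∑ i ∈ Finset.range n, L * (gf (i + 1) - gf i) * Δ :=
              Finset.sum_le_sum (fun i hi => (hstepi i hi).2)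
          _ = L * (g θ' - g θ) * Δ := by
              rw [show (fun i => L * (gf (i + 1) - gf i) * Δ)
                = fun i => (L * Δ) * (gf (i + 1) - gf i) from funext fun i => by ring]
              rw [← Finset.mul_sum, hsum2]
              ring
      rw [abs_le]
      constructor
      · rw [hΔ] at hlb
        rw [show L * (g θ' - g θ) * (θ' - θ) / n = L * (g θ' - g θ) * ((θ' - θ) / n) from
          by ring]
        linarith
      · rw [hΔ] at hub
        rw [show L * (g θ' - g θ) * (θ' - θ) / n = L * (g θ' - g θ) * ((θ' - θ) / n) from
          by ring]
        linarith
    -- pass to the limit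
    by_contra hne
    have hd : 0 < |WFn S ψ θ' (g θ') - WFn S ψ θ (g θ)| := by
      rw [abs_pos, sub_ne_zero]
      exact fun h => hne h.symm
    set d := |WFn S ψ θ' (g θ') - WFn S ψ θ (g θ)| with hdd
    set K := L * (g θ' - g θ) * (θ' - θ) with hK
    have hK0 : 0 ≤ K := by
      have : g θ ≤ g θ' := hgm.monotone hθθ'.le
      apply mul_nonneg (mul_nonneg hL0 (by linarith)) (by linarith)
    obtain ⟨n, hn⟩ := exists_nat_gt (K / d)
    have hn0 : 0 < n := by
      by_contra h
      push_neg at h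
      interval_cases n
      simp at hn
      nlinarith [div_nonneg hK0 hd.le]
    have := htel n hn0
    have hnR : (0 : ℝ) < n := Nat.cast_pos.mpr hn0
    rw [div_lt_iff₀ hd] at hn
    have : d ≤ K / n := this
    rw [le_div_iff₀ hnR] at this
    nlinarith
  rcases lt_trichotomy θ θ' with h | h | h
  · exact main θ θ' h
  · rw [h]
  · exact (main θ' θ h).symm

lemma WFn_diag (θ : ℝ) : WFn S ψ θ θ = S (θ, θ) := by
  simp [WFn]

lemma W_coercive (hS : ContDiff ℝ 2 S) (hε : 0 < ε)
    (hmix : ∀ θ Θ : ℝ, deriv (fun t => deriv (fun u => S (t, u)) Θ) θ ≤ -ε)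
    (hper : ∀ θ Θ : ℝ, S (θ + 1, Θ + 1) = S (θ, Θ))
    (hψc : Continuous ψ) (hψper : ∀ θ, ψ (θ + 1) = ψ θ) :
    ∀ A : ℝ, ∃ R : ℝ, ∀ θ Θ : ℝ, R ≤ |Θ - θ| → A ≤ WFn S ψ θ Θ := by
  obtain ⟨M2, hM20, hM2⟩ := bdd_of_periodic
    ((S2_cont hS).comp (continuous_id.prodMk continuous_id))
    (fun t => S2_per hper t t)
  obtain ⟨Mψ, hMψ0, hMψ⟩ := bdd_of_periodic hψc hψper
  obtain ⟨Ms, hMs0, hMs⟩ := bdd_of_periodic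
    (hS.continuous.comp (continuous_id.prodMk continuous_id))
    (fun t => hper t t)
  simp only [Function.comp, id_eq] at hM2 hMs
  set M := M2 + Mψ with hM
  have hM0 : 0 ≤ M := by linarith
  have key : ∀ θ Θ : ℝ, S (θ, θ) + (ε / 2) * (Θ - θ) ^ 2 - M * |Θ - θ| ≤ WFn S ψ θ Θ := by
    intro θ Θ
    rcases le_total θ Θ with hc | hc
    · set q : ℝ → ℝ := fun s => WFn S ψ θ s - ((ε / 2) * (s - θ) ^ 2 - M * (s - θ)) with hq
      have hqd : ∀ s : ℝ, HasDerivAt q ((S2 S θ s - ψ s) - (ε * (s - θ) - M)) s := by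
        intro s
        have h1 := (hasDerivAt_id s).sub_const θ
        have h2 := (h1.pow 2).const_mul (ε / 2)
        have h3 := h1.const_mul M
        have h4 := (hasDerivAt_W_snd hS hψc θ s).sub (h2.sub h3)
        refine h4.congr_deriv ?_
        simp only [id_eq]
        ring
      have hmono : MonotoneOn q (Ici θ) := by
        refine monotoneOn_of_deriv_nonneg (convex_Ici θ)
          (Continuous.continuousOn (continuous_iff_continuousAt.mpr
            fun s => (hqd s).continuousAt)) (fun s _ => (hqd s).differentiableAt.differentiableWithinAt) ?_
        intro s hs
        rw [interior_Ici] at hs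
        rw [(hqd s).deriv]
        have hr := rateS2 hS hmix s (le_of_lt hs)
        have := hM2 s
        have := hMψ s
        have h1 := (abs_le.mp (hM2 s)).1
        have h2 := (abs_le.mp (hMψ s)).2
        nlinarith
      have := hmono (mem_Ici.mpr le_rfl) (mem_Ici.mpr hc) hc
      simp only [hq] at this
      rw [WFn_diag] at this
      rw [abs_of_nonneg (by linarith : (0:ℝ) ≤ Θ - θ)]
      nlinarith
    · set q : ℝ → ℝ := fun s => WFn S ψ θ s - ((ε / 2) * (θ - s) ^ 2 - M * (θ - s)) with hq
      have hqd : ∀ s : ℝ, HasDerivAt q ((S2 S θ s - ψ s) + (ε * (θ - s) - M)) s := by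
        intro s
        have h1 := (hasDerivAt_id s).const_sub θ
        have h2 := (h1.pow 2).const_mul (ε / 2)
        have h3 := h1.const_mul M
        have h4 := (hasDerivAt_W_snd hS hψc θ s).sub (h2.sub h3)
        refine h4.congr_deriv ?_
        simp only [id_eq]
        ring
      have hanti : AntitoneOn q (Iic θ) := by
        refine antitoneOn_of_deriv_nonpos (convex_Iic θ)
          (Continuous.continuousOn (continuous_iff_continuousAt.mpr
            fun s => (hqd s).continuousAt)) (fun s _ => (hqd s).differentiableAt.differentiableWithinAt) ?_
        intro s hs
        rw [interior_Iic] at hs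
        rw [(hqd s).deriv]
        have hr := rateS2 hS hmix s (le_of_lt hs)
        have h1 := (abs_le.mp (hM2 s)).2
        have h2 := (abs_le.mp (hMψ s)).1
        nlinarith
      have := hanti (mem_Iic.mpr hc) (mem_Iic.mpr le_rfl) hc
      simp only [hq] at this
      rw [WFn_diag] at this
      rw [abs_of_nonpos (by linarith : Θ - θ ≤ 0)]
      nlinarith
  intro A
  refine ⟨max 1 ((M + Ms + |A| + 1) * 2 / ε), fun θ Θ hR => ?_⟩
  set d := |Θ - θ| with hd
  have hd1 : 1 ≤ d := le_trans (le_max_left _ _) hR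
  have hd3 : (M + Ms + |A| + 1) * 2 / ε ≤ d := le_trans (le_max_right _ _) hR
  have hd4 : (M + Ms + |A| + 1) * 2 ≤ d * ε := by
    rw [div_le_iff₀ hε] at hd3
    exact hd3
  have hW := key θ Θ
  have hSd := (abs_le.mp (hMs θ)).1
  have hAbs : A ≤ |A| := le_abs_self A
  have hd0 : 0 ≤ d := abs_nonneg _
  have hsq : d ^ 2 = d * d := sq d
  have h5 : (M + Ms + |A| + 1) * 2 * d ≤ d * ε * d :=
    mul_le_mul_of_nonneg_right hd4 hd0
  have h6 : (Θ - θ) ^ 2 = d ^ 2 := (sq_abs _).symm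
  rw [h6, ← hd] at hW
  nlinarith [hMs0, hM0, hW, hSd,
    mul_nonneg (by positivity : (0:ℝ) ≤ Ms + |A| + 1) (by linarith : (0:ℝ) ≤ d - 1)]

lemma tel_int (f : ℤ → ℝ) {a b : ℤ} (hab : a ≤ b) :
    ∑ j ∈ Finset.Ico a b, (f (j + 1) - f j) = f b - f a := by
  refine Int.le_induction (m := a)
    (motive := fun b _ => ∑ j ∈ Finset.Ico a b, (f (j + 1) - f j) = f b - f a) ?_ ?_ b hab
  · simp
  · intro n hn ih
    have hins : Finset.Ico a (n + 1) = insert n (Finset.Ico a n) := by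
      ext k
      simp only [Finset.mem_Ico, Finset.mem_insert]
      omega
    rw [hins, Finset.sum_insert (by simp), ih]
    ring

end G

end M19

open M19

/-- Mather: if the graph of a continuous `ψ` is invariant by a conservative
twist map with lift `F` and generating function `S`, then the modified
generating function `W` is periodic and coercive, its critical points are
exactly the pairs `(θ, π∘F(θ,ψ(θ)))`, its global minimum is attained precisely
there, and consequently every orbit on the graph of `ψ` is minimizing. -/
theorem stmt19 (S : ℝ × ℝ → ℝ) (ε : ℝ) (hε : 0 < ε) (hS : ContDiff ℝ 2 S)
    (hper : ∀ θ Θ : ℝ, S (θ + 1, Θ + 1) = S (θ, Θ))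
    (hmix : ∀ θ Θ : ℝ, deriv (fun t => deriv (fun u => S (t, u)) Θ) θ ≤ -ε)
    (F : ℝ × ℝ → ℝ × ℝ)
    (hF : ∀ θ r Θ R : ℝ, F (θ, r) = (Θ, R) ↔
      (R = deriv (fun u => S (θ, u)) Θ ∧ r = -(deriv (fun t => S (t, Θ)) θ)))
    (ψ : ℝ → ℝ) (hψc : Continuous ψ) (hψper : ∀ θ, ψ (θ + 1) = ψ θ)
    (hgraph : ∀ θ : ℝ, F (θ, ψ θ) = ((F (θ, ψ θ)).1, ψ ((F (θ, ψ θ)).1))) :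
    (∀ θ Θ : ℝ, WFn S ψ (θ + 1) (Θ + 1) = WFn S ψ θ Θ) ∧
    (∀ A : ℝ, ∃ R : ℝ, ∀ θ Θ : ℝ, R ≤ |Θ - θ| → A ≤ WFn S ψ θ Θ) ∧
    (∀ θ Θ : ℝ,
      (deriv (fun t => WFn S ψ t Θ) θ = 0 ∧ deriv (fun u => WFn S ψ θ u) Θ = 0) ↔
      Θ = (F (θ, ψ θ)).1) ∧
    (∃ mW : ℝ, (∀ θ Θ : ℝ, mW ≤ WFn S ψ θ Θ) ∧
      ∀ θ Θ : ℝ, (WFn S ψ θ Θ = mW ↔ Θ = (F (θ, ψ θ)).1)) ∧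
    (∀ x : ℤ → ℝ, (∀ k : ℤ, x (k + 1) = (F (x k, ψ (x k))).1) →
      ∀ a b : ℤ, a ≤ b → ∀ y : ℤ → ℝ, y a = x a → y b = x b →
        (∑ j ∈ Finset.Ico a b, S (x j, x (j + 1))) ≤
        (∑ j ∈ Finset.Ico a b, S (y j, y (j + 1)))) := by
  classical
  set g : ℝ → ℝ := fun θ => (F (θ, ψ θ)).1 with hgdef
  have hgeq : ∀ t : ℝ, (F (t, ψ t)).1 = g t := fun t => rfl
  have hg12 : ∀ θ, ψ (g θ) = S2 S θ (g θ) ∧ ψ θ = -(S1 S θ (g θ)) := by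
    intro θ
    exact (hF θ (ψ θ) (g θ) (ψ (g θ))).mp (hgraph θ)
  have hg1 : ∀ θ, S1 S θ (g θ) = -(ψ θ) := fun θ => by have := (hg12 θ).2; linarith
  have hg2 : ∀ θ, S2 S θ (g θ) = ψ (g θ) := fun θ => ((hg12 θ).1).symm
  obtain ⟨C, hC0, hgb⟩ := g_bound hS hε hmix hper hψc hψper hg1
  have hgc : Continuous g := g_cont hS hε hmix hψc hg1 hC0 hgb
  have hgm : StrictMono g := g_mono hS hε hmix hg2 hgc hgb
  have hgs : Function.Surjective g := g_surj hgc hC0 hgb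
  have hWle : ∀ θ Θ : ℝ, WFn S ψ θ (g θ) ≤ WFn S ψ θ Θ :=
    W_le hS hε hmix hψc hg2 hgm hgs
  have hmc : ∀ θ θ' : ℝ, WFn S ψ θ (g θ) = WFn S ψ θ' (g θ') :=
    m_const hS hε hmix hψc hg1 hgm hWle hC0 hgb
  refine ⟨?_, ?_, ?_, ?_, ?_⟩
  · intro θ Θ
    simp only [WFn]
    rw [hper, eta_per hψc hψper, eta_per hψc hψper]
    ring
  · exact W_coercive hS hε hmix hper hψc hψper
  · intro θ Θ
    rw [hgeq θ]
    rw [(hasDerivAt_W_fst hS hψc θ Θ).deriv, (hasDerivAt_W_snd hS hψc θ Θ).deriv]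
    constructor
    · rintro ⟨h1, _⟩
      have h3 : S1 S θ Θ = S1 S θ (g θ) := by rw [hg1 θ]; linarith
      exact S1_inj hS hmix hε θ h3
    · rintro rfl
      exact ⟨by rw [hg1 θ]; ring, by rw [hg2 θ]; ring⟩
  · refine ⟨WFn S ψ 0 (g 0), fun θ Θ => ?_, fun θ Θ => ?_⟩
    · calc WFn S ψ 0 (g 0) = WFn S ψ θ (g θ) := hmc 0 θ
        _ ≤ WFn S ψ θ Θ := hWle θ Θ
    · rw [hgeq θ]
      constructor
      · intro h
        by_contra hne
        have hlt := W_strict hS hε hmix hψc hg2 hgm hgs θ Θ hne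
        rw [h, ← hmc 0 θ] at hlt
        exact lt_irrefl _ hlt
      · rintro rfl
        exact hmc θ 0
  · intro x hx a b hab y hya hyb
    have hxg : ∀ k : ℤ, x (k + 1) = g (x k) := fun k => by rw [hx k, hgeq]
    have hSrw : ∀ (z : ℤ → ℝ) (j : ℤ), S (z j, z (j + 1))
        = WFn S ψ (z j) (z (j + 1))
          + ((cconst ψ * z (j + 1) + etaFn ψ (z (j + 1)))
            - (cconst ψ * z j + etaFn ψ (z j))) := by
      intro z j
      simp only [WFn]
      ring
    have hsum : ∀ z : ℤ → ℝ, (∑ j ∈ Finset.Ico a b, S (z j, z (j + 1)))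
        = (∑ j ∈ Finset.Ico a b, WFn S ψ (z j) (z (j + 1)))
          + ((cconst ψ * z b + etaFn ψ (z b)) - (cconst ψ * z a + etaFn ψ (z a))) := by
      intro z
      rw [← tel_int (fun j => cconst ψ * z j + etaFn ψ (z j)) hab, ← Finset.sum_add_distrib]
      exact Finset.sum_congr rfl fun j _ => hSrw z j
    rw [hsum x, hsum y, hya, hyb]
    apply add_le_add_left
    have hterm : ∀ j : ℤ, WFn S ψ (x j) (x (j + 1)) = WFn S ψ 0 (g 0) := fun j => by
      rw [hxg j]; exact hmc (x j) 0
    calc (∑ j ∈ Finset.Ico a b, WFn S ψ (x j) (x (j + 1)))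
        = ∑ _j ∈ Finset.Ico a b, WFn S ψ 0 (g 0) :=
          Finset.sum_congr rfl fun j _ => hterm j
      _ ≤ ∑ j ∈ Finset.Ico a b, WFn S ψ (y j) (y (j + 1)) :=
          Finset.sum_le_sum fun j _ => by
            calc WFn S ψ 0 (g 0) = WFn S ψ (y j) (g (y j)) := hmc 0 (y j)
              _ ≤ WFn S ψ (y j) (y (j + 1)) := hWle _ _
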